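/- Let a ∈ C¹([0,1]) with a > 0, and f ∈ C¹([0,∞)) satisfy (f_eq) and (f_sgn). For each n ∈ ℕ let u_n be a classical solution of (P_n), and assume that (u_n) is bounded in W^{1,1}(0,1) and that v_n := φ_n(u_n') → v uniformly on [0,1]. Then: (i) |v(x)| ≤ 1 for every x ∈ [0,1]; (ii) v(0) = v(1) = 0, so |v| < 1 at the endpoints; (iii) if x̄ ∈ (0,1) is such that, for some δ > 0 and all sufficiently large n, the functions u_n are all convex on [x̄ − δ, x̄ + δ] ⊂ (0,1), or all concave there, then |v(x̄)| < 1. -/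

import Mathlib

open Set MeasureTheory Filter Topology

noncomputable section

/-- `φ(s) = s / √(1+s²)`. -/
def phi (s : ℝ) : ℝ := s / Real.sqrt (1 + s ^ 2)

/-- `φ'(s) = (1+s²)^(-3/2)`. -/
def phiD (s : ℝ) : ℝ := 1 / (Real.sqrt (1 + s ^ 2)) ^ 3

/-- the inverse of `φ`, a bijection of `(-1,1)` onto `ℝ`. -/
def phiInv (y : ℝ) : ℝ := y / Real.sqrt (1 - y ^ 2)

/-- the approximation `φₙ`: equal to `φ` on `[-n,n]`, affine outside. -/
def phiN (n : ℕ) (s : ℝ) : ℝ :=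
  if (n : ℝ) < s then phi n + phiD n * (s - n)
  else if s < -(n : ℝ) then -phi n + phiD n * (s + n)
  else phi s

/-- `Φ(s) = √(1+s²) - 1`. -/
def PhiBig (s : ℝ) : ℝ := Real.sqrt (1 + s ^ 2) - 1

/-- `Φₙ(s) = ∫₀ˢ φₙ`. -/
def PhiNBig (n : ℕ) (s : ℝ) : ℝ := ∫ t in (0:ℝ)..s, phiN n t

/-- the extension `f̂` of `f` vanishing on the negatives. -/
def fhat (f : ℝ → ℝ) (s : ℝ) : ℝ := if s < 0 then 0 else f s

/-- `F(s) = ∫_{u0}^s f`. -/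
def Fprim (f : ℝ → ℝ) (u0 s : ℝ) : ℝ := ∫ t in u0..s, f t

/-- assumption `(f_eq)`. -/
def Feq (f : ℝ → ℝ) (u0 : ℝ) : Prop := f 0 = 0 ∧ f u0 = 0

/-- assumption `(f_sgn)`. -/
def Fsgn (f : ℝ → ℝ) (u0 : ℝ) : Prop :=
  (∀ s, 0 < s → s < u0 → f s < 0) ∧ (∀ s, u0 < s → 0 < f s)

/-- the constant `C_a`. -/
def Ca (a : ℝ → ℝ) : ℝ :=
  max ((a 1 / a 0) * Real.exp (∫ x in (0:ℝ)..1, max (-deriv a x) 0 / a x))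
      ((a 0 / a 1) * Real.exp (∫ x in (0:ℝ)..1, max (deriv a x) 0 / a x))

/-- assumption `(f_ap)`, with the value `ū` made explicit. -/
def Fap (a f : ℝ → ℝ) (u0 ubar : ℝ) : Prop :=
  u0 < ubar ∧ (∫ s in u0..ubar, f s) = Ca a * ∫ s in u0..(0:ℝ), f s

/-- assumption `(f_ap)'`. -/
def Fap' (a f : ℝ → ℝ) : Prop :=
  (∫ x in (0:ℝ)..1, a x) * sSup ((fun s => max (-f s) 0) '' Ici 0) < 1

/-- classical solution of the approximated Neumann problem `(Pₙ)`. -/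
def IsPnSol (a f : ℝ → ℝ) (n : ℕ) (u : ℝ → ℝ) : Prop :=
  ContDiff ℝ 2 u ∧ (∀ x ∈ Ioo (0:ℝ) 1, 0 < u x) ∧
  deriv u 0 = 0 ∧ deriv u 1 = 0 ∧
  ∀ x ∈ Ioo (0:ℝ) 1, -deriv (fun y => phiN n (deriv u y)) x = a x * f (u x)

/-- classical solution of the prescribed mean curvature Neumann problem `(P)`. -/
def IsPSol (a f : ℝ → ℝ) (u : ℝ → ℝ) : Prop :=
  ContDiff ℝ 2 u ∧ (∀ x ∈ Ioo (0:ℝ) 1, 0 < u x) ∧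
  deriv u 0 = 0 ∧ deriv u 1 = 0 ∧
  ∀ x ∈ Ioo (0:ℝ) 1, -deriv (fun y => phi (deriv u y)) x = a x * f (u x)

/-- solution of the Cauchy problem with initial datum `d`. -/
def IsCauchySol (a f : ℝ → ℝ) (n : ℕ) (d : ℝ) (u : ℝ → ℝ) : Prop :=
  ContDiff ℝ 2 u ∧ u 0 = d ∧ deriv u 0 = 0 ∧
  ∀ x ∈ Ioo (0:ℝ) 1, -deriv (fun y => phiN n (deriv u y)) x = a x * fhat f (u x)

/-- `θ` is a (clockwise) angular variable for `(u - u0, φₙ(u'))` around `(u0,0)`. -/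
def IsAngle (n : ℕ) (u0 : ℝ) (u θ : ℝ → ℝ) : Prop :=
  ContinuousOn θ (Icc 0 1) ∧
  ∀ x ∈ Icc (0:ℝ) 1,
    u x - u0 = Real.sqrt ((u x - u0) ^ 2 + phiN n (deriv u x) ^ 2) * Real.cos (θ x) ∧
    phiN n (deriv u x) = -(Real.sqrt ((u x - u0) ^ 2 + phiN n (deriv u x) ^ 2) * Real.sin (θ x))

/-- non-constant on `(0,1)`. -/
def Nonconstant (u : ℝ → ℝ) : Prop := ∃ x ∈ Ioo (0:ℝ) 1, ∃ y ∈ Ioo (0:ℝ) 1, u x ≠ u y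

/-- the set of points of `(0,1)` where `u` takes the value `u0`. -/
def zeroSet (u : ℝ → ℝ) (u0 : ℝ) : Set ℝ := {x | x ∈ Ioo (0:ℝ) 1 ∧ u x = u0}

/-- the hypothesis `f'(u0) > λ_{k+1}`: there is `λ̄ < f'(u0)` admitting a nontrivial Neumann
eigenfunction of `-w'' = λ̄ a w` with exactly `k` zeros in `(0,1)`. -/
def EigenHyp (a f : ℝ → ℝ) (u0 : ℝ) (k : ℕ) : Prop :=
  ∃ lam : ℝ, ∃ w : ℝ → ℝ, lam < deriv f u0 ∧ ContDiff ℝ 2 w ∧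
    (∃ x ∈ Icc (0:ℝ) 1, w x ≠ 0) ∧
    (∀ x ∈ Ioo (0:ℝ) 1, -deriv (deriv w) x = lam * a x * w x) ∧
    deriv w 0 = 0 ∧ deriv w 1 = 0 ∧ (zeroSet w 0).ncard = k

/-- the functional `J(v) = ∫₀¹ √(1+|Dv|²)`. -/
def Jfun (v : ℝ → ℝ) : ℝ :=
  sSup { r : ℝ | ∃ w₁ w₂ : ℝ → ℝ, ContDiff ℝ 1 w₁ ∧ ContDiff ℝ 1 w₂ ∧
    tsupport w₁ ⊆ Ioo 0 1 ∧ tsupport w₂ ⊆ Ioo 0 1 ∧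
    (∀ x, w₁ x ^ 2 + w₂ x ^ 2 ≤ 1) ∧
    r = ∫ x in Ioo (0:ℝ) 1, (v x * deriv w₁ x + w₂ x) }

/-- BV-solution of the Neumann problem `(P)`. -/
def IsBVSol (a f : ℝ → ℝ) (u : ℝ → ℝ) : Prop :=
  BoundedVariationOn u (Ioo 0 1) ∧ (∀ x ∈ Ioo (0:ℝ) 1, 0 ≤ u x) ∧
  ∀ v : ℝ → ℝ, BoundedVariationOn v (Ioo 0 1) →
    Jfun u + ∫ x in Ioo (0:ℝ) 1, a x * f (u x) * (v x - u x) ≤ Jfun v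

/-- `u - u0` changes sign at `z`. -/
def ChangesSign (u : ℝ → ℝ) (u0 z : ℝ) : Prop :=
  ∃ δ > (0:ℝ), ((∀ x ∈ Ioo (z - δ) z, u x < u0) ∧ (∀ x ∈ Ioo z (z + δ), u0 < u x)) ∨
           ((∀ x ∈ Ioo (z - δ) z, u0 < u x) ∧ (∀ x ∈ Ioo z (z + δ), u x < u0))

/-- the energy `Eₙ` along a solution of `(Pₙ)`. -/
def EnergyN (a f : ℝ → ℝ) (u0 : ℝ) (n : ℕ) (u : ℝ → ℝ) (x : ℝ) : ℝ :=
  deriv u x * phiN n (deriv u x) - PhiNBig n (deriv u x) + a x * Fprim f u0 (u x)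

/-- the energy `ℰ` of `u` extends to a continuous function on `[0,1]`. -/
def HasContinuousEnergy (a f : ℝ → ℝ) (u0 : ℝ) (u : ℝ → ℝ) : Prop :=
  ∃ E : ℝ → ℝ, ContinuousOn E (Icc 0 1) ∧
    ∀ x ∈ Ioo (0:ℝ) 1, ContinuousAt u x →
      (DifferentiableAt ℝ u x →
        E x = 1 - 1 / Real.sqrt (1 + deriv u x ^ 2) + a x * Fprim f u0 (u x)) ∧
      (¬ DifferentiableAt ℝ u x → E x = 1 + a x * Fprim f u0 (u x))

/-- the oscillatory structure of the BV-solutions of Theorem 1.1: `m` generalized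
intersections with `u0`, with starting sign `σ` (`σ = 1` for case (I), `σ = -1` for case (II)). -/
def OscStructure (u0 : ℝ) (u : ℝ → ℝ) (m : ℕ) (σ : ℝ) : Prop :=
  ∃ x : ℕ → ℝ,
    x 0 = 0 ∧ x (m + 1) = 1 ∧ (∀ i ≤ m, x i < x (i + 1)) ∧
    ContDiffOn ℝ 2 u (Ico 0 (x 1)) ∧ ContDiffOn ℝ 2 u (Ioc (x m) 1) ∧
    (∀ i, 1 ≤ i → i + 1 ≤ m → ContDiffOn ℝ 2 u (Ioo (x i) (x (i + 1)))) ∧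
    derivWithin u (Icc 0 1) 0 = 0 ∧ derivWithin u (Icc 0 1) 1 = 0 ∧
    (∀ i ≤ m, ∀ y ∈ Ioo (x i) (x (i + 1)), 0 < σ * (-1 : ℝ) ^ (i + 1) * (u y - u0)) ∧
    ∀ i, 1 ≤ i → i ≤ m →
      (u (x i) = u0 ∧ ContDiffOn ℝ 2 u (Ioo (x (i - 1)) (x (i + 1)))) ∨
      (∃ L R : ℝ, Tendsto u (𝓝[<] x i) (𝓝 L) ∧ Tendsto u (𝓝[>] x i) (𝓝 R) ∧
        (0 < σ * (-1 : ℝ) ^ (i + 1) →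
          L ≤ u0 ∧ u0 ≤ R ∧ Tendsto (deriv u) (𝓝[<] x i) atTop ∧
            Tendsto (deriv u) (𝓝[>] x i) atTop) ∧
        (σ * (-1 : ℝ) ^ (i + 1) < 0 →
          R ≤ u0 ∧ u0 ≤ L ∧ Tendsto (deriv u) (𝓝[<] x i) atBot ∧
            Tendsto (deriv u) (𝓝[>] x i) atBot))
lemma sqrt_pos' (s : ℝ) : 0 < Real.sqrt (1 + s ^ 2) := by
  apply Real.sqrt_pos.mpr; positivity

lemma phi_cont : Continuous phi := by
  apply Continuous.div (by fun_prop) (by fun_prop)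
  intro s; exact (sqrt_pos' s).ne'

lemma abs_phi_lt_one (s : ℝ) : |phi s| < 1 := by
  rw [phi, abs_div, abs_of_pos (sqrt_pos' s), div_lt_one (sqrt_pos' s)]
  have h := Real.sqrt_lt_sqrt (by positivity : (0:ℝ) ≤ s ^ 2) (by linarith : s ^ 2 < 1 + s ^ 2)
  rwa [Real.sqrt_sq_eq_abs] at h

lemma phi_odd (s : ℝ) : phi (-s) = -phi s := by
  rw [phi, phi, neg_pow, neg_div]; ring_nf

lemma phi_nonneg' {s : ℝ} (h : 0 ≤ s) : 0 ≤ phi s := by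
  have := sqrt_pos' s; rw [phi]; positivity

lemma phi_mono_nonneg {s t : ℝ} (h0 : 0 ≤ s) (hst : s ≤ t) : phi s ≤ phi t := by
  have hA := sqrt_pos' s
  have hB := sqrt_pos' t
  have hA2 : Real.sqrt (1 + s ^ 2) ^ 2 = 1 + s ^ 2 := Real.sq_sqrt (by positivity)
  have hB2 : Real.sqrt (1 + t ^ 2) ^ 2 = 1 + t ^ 2 := Real.sq_sqrt (by positivity)
  have ht : 0 ≤ t := h0.trans hst
  rw [phi, phi, div_le_div_iff₀ hA hB]
  have hsB : 0 ≤ s * Real.sqrt (1 + t ^ 2) := by positivity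
  have htA : 0 ≤ t * Real.sqrt (1 + s ^ 2) := by positivity
  have hsq : (s * Real.sqrt (1 + t ^ 2)) ^ 2 ≤ (t * Real.sqrt (1 + s ^ 2)) ^ 2 := by
    have : s ^ 2 ≤ t ^ 2 := by nlinarith
    nlinarith
  calc s * Real.sqrt (1 + t ^ 2)
      = Real.sqrt ((s * Real.sqrt (1 + t ^ 2)) ^ 2) := (Real.sqrt_sq hsB).symm
    _ ≤ Real.sqrt ((t * Real.sqrt (1 + s ^ 2)) ^ 2) := Real.sqrt_le_sqrt hsq
    _ = t * Real.sqrt (1 + s ^ 2) := Real.sqrt_sq htA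

lemma phi_mono : Monotone phi := by
  intro s t hst
  rcases le_total 0 s with h0 | h0
  · exact phi_mono_nonneg h0 hst
  · rcases le_total t 0 with h1 | h1
    · have := phi_mono_nonneg (by linarith : (0:ℝ) ≤ -t) (by linarith : -t ≤ -s)
      rw [phi_odd, phi_odd] at this; linarith
    · have hs : phi s ≤ 0 := by
        have := phi_nonneg' (by linarith : (0:ℝ) ≤ -s)
        rw [phi_odd] at this; linarith
      exact hs.trans (phi_nonneg' h1)

lemma phi_nonneg {s : ℝ} (h : 0 ≤ s) : 0 ≤ phi s := by
  have := sqrt_pos' s; rw [phi]; positivity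

lemma phiD_pos (s : ℝ) : 0 < phiD s := by
  have := sqrt_pos' s; rw [phiD]; positivity

lemma phiN_of_abs_le {n : ℕ} {s : ℝ} (h1 : -(n:ℝ) ≤ s) (h2 : s ≤ n) : phiN n s = phi s := by
  rw [phiN, if_neg (not_lt.mpr h2), if_neg (not_lt.mpr h1)]

lemma phiN_eq (n : ℕ) : phiN n = fun s =>
    if s ≤ (n:ℝ) then (if -(n:ℝ) ≤ s then phi s else -phi n + phiD n * (s + n))
    else phi n + phiD n * (s - n) := by
  funext s
  rcases lt_or_ge (n:ℝ) s with h | h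
  · rw [phiN, if_pos h, if_neg (not_le.mpr h)]
  · rw [phiN, if_neg (not_lt.mpr h), if_pos h]
    rcases lt_or_ge s (-(n:ℝ)) with h2 | h2
    · rw [if_pos h2, if_neg (not_le.mpr h2)]
    · rw [if_neg (not_lt.mpr h2), if_pos h2]

lemma phiN_cont (n : ℕ) : Continuous (phiN n) := by
  have hn : (0:ℝ) ≤ (n:ℝ) := Nat.cast_nonneg n
  rw [phiN_eq]
  have hinner : Continuous fun s : ℝ =>
      if -(n:ℝ) ≤ s then phi s else -phi n + phiD n * (s + n) := by
    refine Continuous.if_le phi_cont (by fun_prop) continuous_const continuous_id ?_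
    intro s hs
    rw [← hs, phi_odd]; ring
  refine Continuous.if_le hinner (by fun_prop) continuous_id continuous_const ?_
  intro s hs
  rw [hs, if_pos (by linarith)]; ring

lemma lt_of_phi_lt_phiN {n : ℕ} {s₀ s : ℝ} (h0 : 0 ≤ s₀) (hn : s₀ ≤ n)
    (h : phi s₀ < phiN n s) : s₀ < s := by
  by_contra hs
  push_neg at hs
  rcases lt_or_ge s (-(n:ℝ)) with h2 | h2
  · rw [phiN, if_neg (by push_neg; linarith), if_pos h2] at h
    have := phiD_pos (n:ℝ)
    have hpn : 0 ≤ phi n := phi_nonneg (by linarith)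
    nlinarith [phi_nonneg h0]
  · rw [phiN_of_abs_le h2 (by linarith)] at h
    exact absurd (phi_mono hs) (not_le.mpr h)

lemma lt_of_phiN_lt_neg {n : ℕ} {s₀ s : ℝ} (h0 : 0 ≤ s₀) (hn : s₀ ≤ n)
    (h : phiN n s < -phi s₀) : s < -s₀ := by
  by_contra hs
  push_neg at hs
  rcases lt_or_ge (n:ℝ) s with h2 | h2
  · rw [phiN, if_pos h2] at h
    have := phiD_pos (n:ℝ)
    have hpn : 0 ≤ phi n := phi_nonneg (by linarith)
    nlinarith [phi_nonneg h0]
  · rw [phiN_of_abs_le (by linarith) h2] at h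
    have : phi (-s₀) ≤ phi s := phi_mono hs
    rw [phi_odd] at this; linarith

lemma n_le_abs_of_one_le {n : ℕ} {s : ℝ} (h : 1 ≤ |phiN n s|) : (n:ℝ) ≤ |s| := by
  by_contra hs
  push_neg at hs
  rw [abs_lt] at hs
  rw [phiN_of_abs_le hs.1.le hs.2.le] at h
  exact absurd h (not_le.mpr (abs_phi_lt_one s))

/-- Lemma B: integral lower bound. -/
lemma lemB {g : ℝ → ℝ} (hg : Continuous g) {c d K M : ℝ} (h0 : 0 ≤ c) (hcd : c ≤ d)
    (hd1 : d ≤ 1) (hK : 0 ≤ K) (hM : (∫ x in (0:ℝ)..1, |g x|) ≤ M)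
    (hb : ∀ x ∈ Icc c d, K ≤ |g x|) : K * (d - c) ≤ M := by
  have h1 : K * (d - c) = ∫ _ in c..d, K := by
    rw [intervalIntegral.integral_const]; ring_nf
  have h2 : (∫ _ in c..d, K) ≤ ∫ x in c..d, |g x| := by
    apply intervalIntegral.integral_mono_on hcd intervalIntegrable_const
      (hg.abs.intervalIntegrable c d) hb
  have h3 : (∫ x in c..d, |g x|) ≤ ∫ x in (0:ℝ)..1, |g x| := by
    apply intervalIntegral.integral_mono_interval h0 hcd hd1
      (Eventually.of_forall fun x => abs_nonneg _) (hg.abs.intervalIntegrable 0 1)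
  linarith

/-- key contradiction lemma. -/
lemma keyCase (us : ℕ → ℝ → ℝ) (hdc : ∀ n, Continuous (deriv (us n))) {M : ℝ}
    (hMd : ∀ n, (∫ x in (0:ℝ)..1, |deriv (us n) x|) ≤ M) {s₀ c d : ℝ}
    (h0 : 0 ≤ c) (hcd : c ≤ d) (hd1 : d ≤ 1) (hs0 : 0 ≤ s₀) (hgt : M < s₀ * (d - c))
    (hev : ∀ᶠ n in atTop, ∀ x ∈ Icc c d, s₀ ≤ |deriv (us n) x|) : False := by
  obtain ⟨n, hn⟩ := hev.exists
  exact absurd (lemB (hdc n) h0 hcd hd1 hs0 (hMd n) hn) (not_le.mpr hgt)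


theorem statement17 (a f : ℝ → ℝ) (u0 : ℝ)
    (ha : ContDiff ℝ 1 a) (hapos : ∀ x ∈ Icc (0:ℝ) 1, 0 < a x)
    (hf : ContDiffOn ℝ 1 f (Ici 0)) (hu0 : 0 < u0)
    (hfeq : Feq f u0) (hfsgn : Fsgn f u0)
    (us : ℕ → ℝ → ℝ) (hsol : ∀ n, IsPnSol a f n (us n))
    (hbd : ∃ M : ℝ, ∀ n,
      (∫ x in (0:ℝ)..1, |us n x|) + (∫ x in (0:ℝ)..1, |deriv (us n) x|) ≤ M)
    (v : ℝ → ℝ)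
    (hvconv : TendstoUniformlyOn (fun n x => phiN n (deriv (us n) x)) v atTop (Icc 0 1)) :
    (∀ x ∈ Icc (0:ℝ) 1, |v x| ≤ 1) ∧ v 0 = 0 ∧ v 1 = 0 ∧
    ∀ xb ∈ Ioo (0:ℝ) 1,
      (∃ δ > (0:ℝ), Icc (xb - δ) (xb + δ) ⊆ Ioo (0:ℝ) 1 ∧
        ((∀ᶠ n in atTop, ConvexOn ℝ (Icc (xb - δ) (xb + δ)) (us n)) ∨
         (∀ᶠ n in atTop, ConcaveOn ℝ (Icc (xb - δ) (xb + δ)) (us n)))) →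
      |v xb| < 1 := by
  obtain ⟨M, hM⟩ := hbd
  have hMd : ∀ n, (∫ x in (0:ℝ)..1, |deriv (us n) x|) ≤ M := by
    intro n
    have h1 : 0 ≤ ∫ x in (0:ℝ)..1, |us n x| :=
      intervalIntegral.integral_nonneg (by norm_num) fun x _ => abs_nonneg _
    linarith [hM n]
  have hdc : ∀ n, Continuous (deriv (us n)) := fun n => (hsol n).1.continuous_deriv one_le_two
  have hdiff : ∀ n, Differentiable ℝ (us n) := fun n => (hsol n).1.differentiable (by norm_num)
  have hvn_cont : ∀ n, Continuous fun x => phiN n (deriv (us n) x) :=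
    fun n => (phiN_cont n).comp (hdc n)
  have hv_cont : ContinuousOn v (Icc 0 1) :=
    hvconv.continuousOn (Eventually.of_forall fun n => (hvn_cont n).continuousOn).frequently
  have part1 : ∀ x ∈ Icc (0:ℝ) 1, |v x| ≤ 1 := by
    intro x₀ hx₀
    by_contra hgt
    push_neg at hgt
    set L := (1 + |v x₀|) / 2 with hL
    have hL1 : 1 < L := by rw [hL]; linarith
    have hLlt : L < |v x₀| := by rw [hL]; linarith
    have hev : ∀ᶠ y in 𝓝[Icc (0:ℝ) 1] x₀, L < |v y| := by
      have ht : Tendsto (fun y => |v y|) (𝓝[Icc (0:ℝ) 1] x₀) (𝓝 |v x₀|) :=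
        (continuous_abs.tendsto (v x₀)).comp (hv_cont x₀ hx₀)
      exact ht.eventually (eventually_gt_nhds hLlt)
    rw [eventually_nhdsWithin_iff, Metric.eventually_nhds_iff] at hev
    obtain ⟨ε, hε, hball⟩ := hev
    set c := max 0 (x₀ - ε / 2) with hc
    set d := min 1 (x₀ + ε / 2) with hd
    have hc0 : (0:ℝ) ≤ c := le_max_left _ _
    have hd1 : d ≤ 1 := min_le_left _ _
    have hcx : c ≤ x₀ := max_le hx₀.1 (by linarith)
    have hxd : x₀ ≤ d := le_min hx₀.2 (by linarith)
    have hcd : c < d := by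
      rcases lt_or_ge x₀ 1 with h | h
      · exact lt_of_le_of_lt hcx (lt_min h (by linarith))
      · have hx1 : x₀ = 1 := le_antisymm hx₀.2 h
        have h2 : c < 1 := max_lt (by norm_num) (by rw [hx1]; linarith)
        have h3 : (1:ℝ) ≤ d := le_min le_rfl (by rw [hx1]; linarith)
        linarith
    have hvL : ∀ y ∈ Icc c d, L < |v y| := by
      intro y hy
      have hy01 : y ∈ Icc (0:ℝ) 1 := ⟨hc0.trans hy.1, hy.2.trans hd1⟩
      have hdist : dist y x₀ < ε := by
        rw [Real.dist_eq, abs_lt]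
        constructor
        · have := hy.1; have := le_max_right 0 (x₀ - ε / 2); linarith [hy.1.trans' this]
        · have := hy.2.trans (min_le_right 1 (x₀ + ε / 2)); linarith
      exact hball hdist hy01
    have huc := Metric.tendstoUniformlyOn_iff.mp hvconv (L - 1) (by linarith)
    have hn2 : ∀ᶠ n : ℕ in atTop, M / (d - c) < (n:ℝ) :=
      tendsto_natCast_atTop_atTop.eventually_gt_atTop (M / (d - c))
    obtain ⟨n, hn1, hn2⟩ := (huc.and hn2).exists
    have hK : ∀ x ∈ Icc c d, (n:ℝ) ≤ |deriv (us n) x| := by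
      intro x hx
      have hx01 : x ∈ Icc (0:ℝ) 1 := ⟨hc0.trans hx.1, hx.2.trans hd1⟩
      have h1 := hn1 x hx01
      have h2 := hvL x hx
      rw [Real.dist_eq] at h1
      apply n_le_abs_of_one_le
      have h3 := abs_sub_abs_le_abs_sub (v x) (phiN n (deriv (us n) x))
      linarith [le_abs_self (v x - phiN n (deriv (us n) x))]
    have hB := lemB (hdc n) hc0 hcd.le hd1 (Nat.cast_nonneg n) (hMd n) hK
    have hdcpos : 0 < d - c := by linarith
    rw [div_lt_iff₀ hdcpos] at hn2
    linarith
  have endpt : ∀ x₀ ∈ Icc (0:ℝ) 1, (∀ n, deriv (us n) x₀ = 0) → v x₀ = 0 := by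
    intro x₀ hx₀ hder
    have h0 : Tendsto (fun n => phiN n (deriv (us n) x₀)) atTop (𝓝 (v x₀)) :=
      hvconv.tendsto_at hx₀
    have heq : ∀ n : ℕ, phiN n (deriv (us n) x₀) = 0 := by
      intro n
      rw [hder n, phiN_of_abs_le (by simp) (Nat.cast_nonneg n)]
      simp [phi]
    simp only [heq] at h0
    exact (tendsto_nhds_unique tendsto_const_nhds h0).symm
  refine ⟨part1, endpt 0 ⟨le_rfl, by norm_num⟩ fun n => (hsol n).2.2.1,
    endpt 1 ⟨by norm_num, le_rfl⟩ fun n => (hsol n).2.2.2.1, ?_⟩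
  intro xb hxb hhyp
  obtain ⟨δ, hδ, hsub, hcase⟩ := hhyp
  by_contra h1
  push_neg at h1
  have hxb01 : xb ∈ Icc (0:ℝ) 1 := ⟨hxb.1.le, hxb.2.le⟩
  have habs : |v xb| = 1 := le_antisymm (part1 xb hxb01) h1
  have hmemI : xb ∈ Icc (xb - δ) (xb + δ) := ⟨by linarith, by linarith⟩
  have hleft : 0 < xb - δ := (hsub ⟨le_rfl, by linarith⟩).1
  have hright : xb + δ < 1 := (hsub ⟨by linarith, le_rfl⟩).2
  set s₀ := 2 * (max M 0 + 1) / δ with hs₀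
  have hs₀0 : 0 ≤ s₀ := by positivity
  have hps₀ : phi s₀ < 1 := (le_abs_self _).trans_lt (abs_phi_lt_one s₀)
  have hgtδ : M < s₀ * δ := by
    rw [hs₀, div_mul_cancel₀ _ hδ.ne']
    have := le_max_left M 0
    have := le_max_right M 0
    linarith
  have huc := Metric.tendstoUniformlyOn_iff.mp hvconv (1 - phi s₀) (by linarith)
  have hucx : ∀ᶠ n : ℕ in atTop, dist (v xb) (phiN n (deriv (us n) xb)) < 1 - phi s₀ :=
    huc.mono fun n hn => hn xb hxb01
  have hnlarge : ∀ᶠ n : ℕ in atTop, s₀ ≤ (n:ℝ) :=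
    tendsto_natCast_atTop_atTop.eventually_ge_atTop s₀
  rcases (abs_eq (by norm_num : (0:ℝ) ≤ 1)).mp habs with hv1 | hv1
  · -- v xb = 1
    have hstep : ∀ᶠ n : ℕ in atTop, s₀ < deriv (us n) xb := by
      filter_upwards [hucx, hnlarge] with n hd hn
      apply lt_of_phi_lt_phiN hs₀0 hn
      rw [Real.dist_eq, hv1, abs_lt] at hd
      linarith
    rcases hcase with hconv | hconc
    · refine keyCase us hdc hMd (c := xb) (d := xb + δ) hxb.1.le (by linarith) hright.le hs₀0
        (by rw [show xb + δ - xb = δ by ring]; exact hgtδ) ?_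
      filter_upwards [hconv, hstep] with n hcv hs x hx
      have hmono := hcv.monotoneOn_deriv fun y _ => (hdiff n).differentiableAt
      have hxI : x ∈ Icc (xb - δ) (xb + δ) := ⟨by linarith [hx.1], hx.2⟩
      have h5 := hmono hmemI hxI hx.1
      exact le_trans (by linarith) (le_abs_self _)
    · refine keyCase us hdc hMd (c := xb - δ) (d := xb) hleft.le (by linarith) hxb.2.le hs₀0
        (by rw [show xb - (xb - δ) = δ by ring]; exact hgtδ) ?_
      filter_upwards [hconc, hstep] with n hcv hs x hx
      have hmono := hcv.antitoneOn_deriv fun y _ => (hdiff n).differentiableAt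
      have hxI : x ∈ Icc (xb - δ) (xb + δ) := ⟨hx.1, by linarith [hx.2]⟩
      have h5 := hmono hxI hmemI hx.2
      exact le_trans (by linarith) (le_abs_self _)
  · -- v xb = -1
    have hstep : ∀ᶠ n : ℕ in atTop, deriv (us n) xb < -s₀ := by
      filter_upwards [hucx, hnlarge] with n hd hn
      apply lt_of_phiN_lt_neg hs₀0 hn
      rw [Real.dist_eq, hv1, abs_lt] at hd
      linarith
    rcases hcase with hconv | hconc
    · refine keyCase us hdc hMd (c := xb - δ) (d := xb) hleft.le (by linarith) hxb.2.le hs₀0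
        (by rw [show xb - (xb - δ) = δ by ring]; exact hgtδ) ?_
      filter_upwards [hconv, hstep] with n hcv hs x hx
      have hmono := hcv.monotoneOn_deriv fun y _ => (hdiff n).differentiableAt
      have hxI : x ∈ Icc (xb - δ) (xb + δ) := ⟨hx.1, by linarith [hx.2]⟩
      have h5 := hmono hxI hmemI hx.2
      calc s₀ ≤ -(deriv (us n) x) := by linarith
        _ ≤ |deriv (us n) x| := neg_le_abs _
    · refine keyCase us hdc hMd (c := xb) (d := xb + δ) hxb.1.le (by linarith) hright.le hs₀0
        (by rw [show xb + δ - xb = δ by ring]; exact hgtδ) ?_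
      filter_upwards [hconc, hstep] with n hcv hs x hx
      have hmono := hcv.antitoneOn_deriv fun y _ => (hdiff n).differentiableAt
      have hxI : x ∈ Icc (xb - δ) (xb + δ) := ⟨by linarith [hx.1], hx.2⟩
      have h5 := hmono hmemI hxI hx.1
      calc s₀ ≤ -(deriv (us n) x) := by linarith
        _ ≤ |deriv (us n) x| := neg_le_abs _
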